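/- Let Z_1, Z_2, … be i.i.d. standard normal random variables and for p ≥ 2 let V₁(p) and V₂(p) denote the largest and second largest values among |Z_1|, …, |Z_p|. Then the covariance test statistic T₁(p) = V₁(p) · (V₁(p) − V₂(p)) converges in distribution to the standard exponential distribution as p → ∞; that is, for every t ≥ 0, ℙ( V₁(p)(V₁(p) − V₂(p)) > t ) → e^{−t}. -/

import Mathlib

open MeasureTheory ProbabilityTheory Filter Real
open Set

/-- The largest of the values `|x 0|, …, |x (p-1)|`. -/
noncomputable def V1 (p : ℕ) (x : ℕ → ℝ) : ℝ :=
  ⨆ i : Fin p, |x i|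

/-- The second largest of the values `|x 0|, …, |x (p-1)|` (counted with multiplicity),
realized as the maximum over distinct pairs of the minimum of the pair. -/
noncomputable def V2 (p : ℕ) (x : ℕ → ℝ) : ℝ :=
  ⨆ i : Fin p, ⨆ j : Fin p, ⨆ _ : i ≠ j, min |x i| |x j|

noncomputable def g01 : ℝ → ℝ := gaussianPDFReal 0 1

noncomputable def Fc (x : ℝ) : ℝ := 2 * ∫ s in (0:ℝ)..x, g01 s

noncomputable def hfun (t v : ℝ) : ℝ := v - t / v

lemma g01_def (x : ℝ) : g01 x = (Real.sqrt (2 * π))⁻¹ * Real.exp (-(x ^ 2) / 2) := by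
  simp [g01, gaussianPDFReal]

lemma g01_cont : Continuous g01 := by
  simp only [funext g01_def]
  fun_prop

lemma g01_pos (x : ℝ) : 0 < g01 x := gaussianPDFReal_pos 0 1 x one_ne_zero

lemma g01_even (x : ℝ) : g01 (-x) = g01 x := by
  simp [g01_def, neg_pow]

lemma g01_integrable : Integrable g01 := integrable_gaussianPDFReal 0 1

lemma Fc_hasDeriv (x : ℝ) : HasDerivAt Fc (2 * g01 x) x := by
  have h : HasDerivAt (fun u => ∫ s in (0:ℝ)..u, g01 s) (g01 x) x :=
    intervalIntegral.integral_hasDerivAt_right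
      (g01_cont.intervalIntegrable _ _)
      (g01_cont.stronglyMeasurable.stronglyMeasurableAtFilter)
      g01_cont.continuousAt
  exact h.const_mul 2

lemma Fc_cont : Continuous Fc := by
  have : Differentiable ℝ Fc := fun x => (Fc_hasDeriv x).differentiableAt
  exact this.continuous

lemma Fc_zero : Fc 0 = 0 := by simp [Fc]

lemma Fc_nonneg {x : ℝ} (hx : 0 ≤ x) : 0 ≤ Fc x := by
  have := intervalIntegral.integral_nonneg (μ := volume) (f := g01) hx
    (fun u _ => (g01_pos u).le)
  simp only [Fc]; linarith

lemma integral_g01_Ioi_zero : ∫ s in Ioi (0:ℝ), g01 s = 1 / 2 := by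
  have h1 : ∫ s, g01 s = 1 := integral_gaussianPDFReal_eq_one 0 one_ne_zero
  have h2 : ∫ s in Iic (0:ℝ), g01 s = ∫ s in Ioi (0:ℝ), g01 s := by
    rw [show Iic (0:ℝ) = Iic (-(0:ℝ)) by norm_num, ← integral_comp_neg_Ioi]
    exact setIntegral_congr_fun measurableSet_Ioi fun x _ => g01_even x
  have h3 := integral_add_compl (μ := volume) (measurableSet_Iic (a := (0:ℝ)))
    g01_integrable (f := g01)
  rw [compl_Iic] at h3
  linarith

lemma Fc_eq_one_sub {x : ℝ} (hx : 0 ≤ x) :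
    Fc x = 1 - 2 * ∫ s in Ioi x, g01 s := by
  have hsplit : ∫ s in Ioi (0:ℝ), g01 s
      = (∫ s in Ioc 0 x, g01 s) + ∫ s in Ioi x, g01 s := by
    rw [← setIntegral_union (Set.Ioc_disjoint_Ioi le_rfl) measurableSet_Ioi
      (g01_integrable.integrableOn) (g01_integrable.integrableOn),
      Set.Ioc_union_Ioi_eq_Ioi hx]
  have hF : Fc x = 2 * ∫ s in Ioc 0 x, g01 s := by
    rw [Fc, intervalIntegral.integral_of_le hx]
  rw [integral_g01_Ioi_zero] at hsplit
  rw [hF]; linarith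

lemma Fc_lt_one {x : ℝ} (hx : 0 ≤ x) : Fc x < 1 := by
  rw [Fc_eq_one_sub hx]
  have hpos : 0 < ∫ s in Ioi x, g01 s := by
    refine (setIntegral_pos_iff_support_of_nonneg_ae ?_ ?_).2 ?_
    · exact ae_of_all _ fun u => (g01_pos u).le
    · exact g01_integrable.integrableOn
    · have hs : (Function.support g01) = Set.univ := by
        ext u; simp [Function.support, (g01_pos u).ne']
      rw [hs, Set.univ_inter]
      simp [Real.volume_Ioi]
  linarith

lemma Fc_le_one {x : ℝ} (hx : 0 ≤ x) : Fc x ≤ 1 := (Fc_lt_one hx).le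

lemma Fc_tendsto : Tendsto Fc atTop (nhds 1) := by
  have h := intervalIntegral_tendsto_integral_Ioi (μ := volume) 0
    (g01_integrable.integrableOn) (tendsto_id (α := ℝ))
  rw [integral_g01_Ioi_zero] at h
  have h2 := h.const_mul (2:ℝ)
  show Tendsto (fun x => 2 * ∫ s in (0:ℝ)..x, g01 s) atTop (nhds 1)
  simpa [mul_comm] using h2

section hfun_facts

variable {t : ℝ}

lemma hfun_sqrt (ht : 0 ≤ t) : hfun t (Real.sqrt t) = 0 := by
  rcases ht.eq_or_lt with rfl | ht'
  · simp [hfun]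
  · simp [hfun, Real.div_sqrt]

lemma hfun_pos (ht : 0 ≤ t) {v : ℝ} (hv : Real.sqrt t < v) : 0 < hfun t v := by
  have hv0 : 0 < v := lt_of_le_of_lt (Real.sqrt_nonneg t) hv
  have ht' : t < v ^ 2 := (Real.sqrt_lt' hv0).1 hv
  rw [hfun, sub_pos, div_lt_iff₀ hv0]
  nlinarith

lemma hfun_le (ht : 0 ≤ t) {v : ℝ} (hv : 0 < v) : hfun t v ≤ v := by
  have : 0 ≤ t / v := div_nonneg ht hv.le
  simp only [hfun]; linarith

lemma hfun_hasDeriv {v : ℝ} (hv : v ≠ 0) :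
    HasDerivAt (hfun t) (1 + t / v ^ 2) v := by
  have h1 : HasDerivAt (fun u : ℝ => t / u) (-(t / v ^ 2)) v := by
    simpa [div_eq_mul_inv, neg_div, mul_div_assoc] using (hasDerivAt_inv hv).const_mul t
  exact ((hasDerivAt_id v).sub h1).congr_deriv (by ring)

lemma hfun_tendsto (ht : 0 ≤ t) : Tendsto (hfun t) atTop atTop := by
  have h1 : Tendsto (fun v : ℝ => -(t / v)) atTop (nhds 0) := by
    have := (tendsto_inv_atTop_zero (𝕜 := ℝ)).const_mul t
    simpa [div_eq_mul_inv, neg_zero] using this.neg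
  have := Tendsto.atTop_add (tendsto_id (α := ℝ) (x := atTop)) h1
  show Tendsto (fun v => v - t / v) atTop atTop
  simpa [sub_eq_add_neg] using this

lemma hfun_contWithin (ht : 0 ≤ t) :
    ContinuousWithinAt (hfun t) (Ici (Real.sqrt t)) (Real.sqrt t) := by
  rcases ht.eq_or_lt with rfl | ht'
  · have : hfun 0 = id := by funext v; simp [hfun]
    rw [this]
    exact continuousWithinAt_id
  · have h0 : Real.sqrt t ≠ 0 := ne_of_gt (Real.sqrt_pos.2 ht')
    exact (hfun_hasDeriv h0).continuousAt.continuousWithinAt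

end hfun_facts

noncomputable def Dp (t : ℝ) (q : ℕ) (v : ℝ) : ℝ :=
  ((q : ℝ) + 1) * Fc (hfun t v) ^ q * (2 * g01 (hfun t v)) * (1 + t / v ^ 2)

section ftc

variable {t : ℝ} (q : ℕ)

lemma gW_hasDeriv {v : ℝ} (hv : Real.sqrt t < v) :
    HasDerivAt (fun u => Fc (hfun t u) ^ (q + 1)) (Dp t q v) v := by
  have hv0 : 0 < v := lt_of_le_of_lt (Real.sqrt_nonneg t) hv
  have h1 : HasDerivAt (fun u => Fc (hfun t u))
      (2 * g01 (hfun t v) * (1 + t / v ^ 2)) v :=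
    (Fc_hasDeriv (hfun t v)).comp v (hfun_hasDeriv hv0.ne')
  have h2 : HasDerivAt (fun u => Fc (hfun t u) ^ (q + 1)) _ v := h1.pow (q + 1)
  convert h2 using 1
  simp only [Dp, Nat.add_sub_cancel]
  push_cast
  ring

lemma Dp_nonneg (ht : 0 ≤ t) {v : ℝ} (hv : Real.sqrt t < v) : 0 ≤ Dp t q v := by
  have hv0 : 0 < v := lt_of_le_of_lt (Real.sqrt_nonneg t) hv
  have h1 : 0 ≤ Fc (hfun t v) := Fc_nonneg (hfun_pos ht hv).le
  have h2 : 0 < g01 (hfun t v) := g01_pos _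
  have h3 : 0 ≤ t / v ^ 2 := div_nonneg ht (sq_nonneg v)
  have h4 : (0:ℝ) ≤ (q : ℝ) + 1 := by positivity
  apply mul_nonneg
  apply mul_nonneg
  · exact mul_nonneg h4 (pow_nonneg h1 q)
  · linarith
  · linarith

lemma gW_contWithin (ht : 0 ≤ t) :
    ContinuousWithinAt (fun u => Fc (hfun t u) ^ (q + 1)) (Ici (Real.sqrt t))
      (Real.sqrt t) :=
  ((Fc_cont.continuousAt.comp_continuousWithinAt (hfun_contWithin ht)).pow (q + 1))

lemma gW_tendsto (ht : 0 ≤ t) : Tendsto (fun u => Fc (hfun t u) ^ (q + 1)) atTop (nhds 1) := by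
  have := (Fc_tendsto.comp (hfun_tendsto ht)).pow (q + 1)
  simpa using this

lemma Dp_integral (ht : 0 ≤ t) : ∫ v in Ioi (Real.sqrt t), Dp t q v = 1 := by
  rw [integral_Ioi_of_hasDerivAt_of_nonneg (gW_contWithin q ht)
    (fun x hx => gW_hasDeriv q hx) (fun x hx => Dp_nonneg q ht hx) (gW_tendsto q ht)]
  simp [hfun_sqrt ht, Fc_zero]

lemma Dp_integrableOn (ht : 0 ≤ t) : IntegrableOn (Dp t q) (Ioi (Real.sqrt t)) :=
  integrableOn_Ioi_deriv_of_nonneg (gW_contWithin q ht)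
    (fun x hx => gW_hasDeriv q hx) (fun x hx => Dp_nonneg q ht hx) (gW_tendsto q ht)

lemma Dp_integral_Ioc (ht : 0 ≤ t) {V : ℝ} (hV : Real.sqrt t ≤ V) :
    ∫ v in Ioc (Real.sqrt t) V, Dp t q v = Fc (hfun t V) ^ (q + 1) := by
  have hcont : ContinuousOn (fun u => Fc (hfun t u) ^ (q + 1)) (Icc (Real.sqrt t) V) := by
    intro x hx
    rcases eq_or_lt_of_le hx.1 with rfl | hlt
    · exact ((gW_contWithin q ht).mono (Icc_subset_Ici_self))
    · exact ((gW_hasDeriv q hlt).continuousAt).continuousWithinAt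
  have hint : IntervalIntegrable (Dp t q) volume (Real.sqrt t) V := by
    rw [intervalIntegrable_iff_integrableOn_Ioc_of_le hV]
    exact (Dp_integrableOn q ht).mono_set Ioc_subset_Ioi_self
  have := intervalIntegral.integral_eq_sub_of_hasDerivAt_of_le hV hcont
    (fun x hx => gW_hasDeriv q hx.1) hint
  rw [intervalIntegral.integral_of_le hV] at this
  rw [this, hfun_sqrt ht, Fc_zero]
  simp

end ftc

noncomputable def rr (t v : ℝ) : ℝ :=
  Real.exp (-t + t ^ 2 / (2 * v ^ 2)) / (1 + t / v ^ 2)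

section rrfacts

variable {t : ℝ}

lemma g01_expand {v : ℝ} (hv : v ≠ 0) :
    g01 v = g01 (hfun t v) * Real.exp (-t + t ^ 2 / (2 * v ^ 2)) := by
  rw [g01_def, g01_def, mul_assoc, ← Real.exp_add]
  congr 1
  congr 1
  rw [hfun]
  field_simp
  ring

lemma rr_pos (ht : 0 ≤ t) {v : ℝ} (hv : Real.sqrt t < v) : 0 < rr t v := by
  have hv0 : 0 < v := lt_of_le_of_lt (Real.sqrt_nonneg t) hv
  have hden : 0 < 1 + t / v ^ 2 := by
    have : 0 ≤ t / v ^ 2 := div_nonneg ht (sq_nonneg v)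
    linarith
  exact div_pos (Real.exp_pos _) hden

lemma rr_le_one (ht : 0 ≤ t) {v : ℝ} (hv : Real.sqrt t < v) : rr t v ≤ 1 := by
  have hv0 : 0 < v := lt_of_le_of_lt (Real.sqrt_nonneg t) hv
  have ht' : t < v ^ 2 := (Real.sqrt_lt' hv0).1 hv
  have hden : 0 < 1 + t / v ^ 2 := by
    have : 0 ≤ t / v ^ 2 := div_nonneg ht (sq_nonneg v)
    linarith
  rw [rr, div_le_one hden]
  have h1 : Real.exp (-t + t ^ 2 / (2 * v ^ 2)) ≤ 1 := by
    rw [Real.exp_le_one_iff]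
    have hv2 : 0 < v ^ 2 := by positivity
    have : t ^ 2 / (2 * v ^ 2) ≤ t / 2 := by
      rw [div_le_div_iff₀ (by positivity) (by positivity)]
      nlinarith
    linarith
  have : 0 ≤ t / v ^ 2 := div_nonneg ht (sq_nonneg v)
  linarith

lemma rr_absbound (ht : 0 ≤ t) {v : ℝ} (hv : Real.sqrt t < v) :
    |rr t v - Real.exp (-t)| ≤ 1 := by
  have h1 := rr_pos ht hv
  have h2 := rr_le_one ht hv
  have h3 : 0 < Real.exp (-t) := Real.exp_pos _
  have h4 : Real.exp (-t) ≤ 1 := Real.exp_le_one_iff.2 (by linarith)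
  rw [abs_le]
  constructor <;> linarith

lemma rr_tendsto (ht : 0 ≤ t) : Tendsto (rr t) atTop (nhds (Real.exp (-t))) := by
  have hsq : Tendsto (fun v : ℝ => (v ^ 2)⁻¹) atTop (nhds 0) :=
    tendsto_inv_atTop_zero.comp (tendsto_pow_atTop two_ne_zero)
  have h1 : Tendsto (fun v : ℝ => -t + t ^ 2 / (2 * v ^ 2)) atTop (nhds (-t)) := by
    have := (hsq.const_mul (t ^ 2 / 2)).const_add (-t)
    simp only [mul_zero, add_zero] at this
    refine this.congr fun v => ?_
    field_simp
  have h2 : Tendsto (fun v : ℝ => 1 + t / v ^ 2) atTop (nhds 1) := by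
    have := (hsq.const_mul t).const_add (1:ℝ)
    simp only [mul_zero, add_zero] at this
    refine this.congr fun v => ?_
    field_simp
  have := ((Real.continuous_exp.tendsto _).comp h1).div h2 one_ne_zero
  rw [div_one] at this
  exact this

lemma Dp_mul_rr (ht : 0 ≤ t) (q : ℕ) {v : ℝ} (hv : Real.sqrt t < v) :
    Dp t q v * rr t v = ((q : ℝ) + 1) * Fc (hfun t v) ^ q * (2 * g01 v) := by
  have hv0 : 0 < v := lt_of_le_of_lt (Real.sqrt_nonneg t) hv
  have hden : 0 < 1 + t / v ^ 2 := by
    have : 0 ≤ t / v ^ 2 := div_nonneg ht (sq_nonneg v)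
    linarith
  rw [Dp, rr, g01_expand hv0.ne' (t := t)]
  field_simp

lemma measurable_hfun : Measurable (hfun t) :=
  measurable_id.sub (measurable_const.div measurable_id)

lemma measurable_Dp (q : ℕ) : Measurable (Dp t q) := by
  apply Measurable.mul
  apply Measurable.mul
  apply Measurable.mul measurable_const
  · exact (Fc_cont.measurable.comp measurable_hfun).pow_const q
  · exact (g01_cont.measurable.comp measurable_hfun).const_mul 2
  · exact measurable_const.add (measurable_const.div ((measurable_id.pow_const 2)))

lemma measurable_rr : Measurable (rr t) := by
  apply Measurable.div
  · exact Real.measurable_exp.comp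
      (measurable_const.add (measurable_const.div ((measurable_id.pow_const 2).const_mul 2)))
  · exact measurable_const.add (measurable_const.div (measurable_id.pow_const 2))

end rrfacts

lemma KK_tendsto {t : ℝ} (ht : 0 ≤ t) :
    Tendsto (fun q : ℕ => ∫ v in Ioi (Real.sqrt t),
        ((q : ℝ) + 1) * Fc (hfun t v) ^ q * (2 * g01 v))
      atTop (nhds (Real.exp (-t))) := by
  set e := Real.exp (-t) with he
  rw [Metric.tendsto_atTop]
  intro ε hε
  -- choose V
  obtain ⟨V₀, hV₀⟩ := (Metric.tendsto_atTop.1 (rr_tendsto ht)) (ε / 2) (half_pos hε)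
  set V := max V₀ (Real.sqrt t) with hVdef
  have hV : Real.sqrt t ≤ V := le_max_right _ _
  have hc0 : 0 ≤ Fc (hfun t V) := by
    rcases eq_or_lt_of_le hV with heq | hlt
    · rw [← heq, hfun_sqrt ht, Fc_zero]
    · exact Fc_nonneg (hfun_pos ht hlt).le
  have hc1 : Fc (hfun t V) < 1 := by
    apply Fc_lt_one
    rcases eq_or_lt_of_le hV with heq | hlt
    · rw [← heq, hfun_sqrt ht]
    · exact (hfun_pos ht hlt).le
  have hpow : Tendsto (fun q : ℕ => Fc (hfun t V) ^ (q + 1)) atTop (nhds 0) := by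
    have h := tendsto_pow_atTop_nhds_zero_of_lt_one hc0 hc1
    exact h.comp (tendsto_add_atTop_nat 1)
  obtain ⟨N, hN⟩ := (Metric.tendsto_atTop.1 hpow) (ε / 2) (half_pos hε)
  refine ⟨N, fun q hq => ?_⟩
  have hNq := hN q hq
  rw [Real.dist_eq] at hNq
  rw [abs_sub_lt_iff] at hNq
  have hFpow : Fc (hfun t V) ^ (q + 1) < ε / 2 := by
    have := pow_nonneg hc0 (q + 1)
    linarith [hNq.1]
  -- rewrite integrand
  have hcong : ∫ v in Ioi (Real.sqrt t), ((q : ℝ) + 1) * Fc (hfun t v) ^ q * (2 * g01 v)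
      = ∫ v in Ioi (Real.sqrt t), Dp t q v * rr t v := by
    refine setIntegral_congr_fun measurableSet_Ioi fun v hv => ?_
    exact (Dp_mul_rr ht q hv).symm
  rw [hcong, Real.dist_eq]
  -- integrability facts
  have intDp : IntegrableOn (Dp t q) (Ioi (Real.sqrt t)) := Dp_integrableOn q ht
  have measDpr : Measurable (fun v => Dp t q v * rr t v) :=
    (measurable_Dp q).mul measurable_rr
  have measDpabs : Measurable (fun v => Dp t q v * |rr t v - e|) :=
    (measurable_Dp q).mul ((measurable_rr.sub measurable_const).abs)
  have hbnd : ∀ v ∈ Ioi (Real.sqrt t), Dp t q v * |rr t v - e| ≤ Dp t q v := by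
    intro v hv
    have h1 := Dp_nonneg q ht (mem_Ioi.1 hv)
    have h2 := rr_absbound ht (mem_Ioi.1 hv)
    calc Dp t q v * |rr t v - e| ≤ Dp t q v * 1 := by
          exact mul_le_mul_of_nonneg_left h2 h1
      _ = Dp t q v := mul_one _
  have intDpabs : IntegrableOn (fun v => Dp t q v * |rr t v - e|) (Ioi (Real.sqrt t)) := by
    refine Integrable.mono' intDp measDpabs.aestronglyMeasurable ?_
    refine (ae_restrict_iff' measurableSet_Ioi).2 (ae_of_all _ fun v hv => ?_)
    have h1 := Dp_nonneg q ht (mem_Ioi.1 hv)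
    have h2 := abs_nonneg (rr t v - e)
    rw [Real.norm_eq_abs, abs_of_nonneg (mul_nonneg h1 h2)]
    exact hbnd v hv
  have intDpr : IntegrableOn (fun v => Dp t q v * rr t v) (Ioi (Real.sqrt t)) := by
    refine Integrable.mono' intDp measDpr.aestronglyMeasurable ?_
    refine (ae_restrict_iff' measurableSet_Ioi).2 (ae_of_all _ fun v hv => ?_)
    have h1 := Dp_nonneg q ht (mem_Ioi.1 hv)
    have h2 := rr_pos ht (mem_Ioi.1 hv)
    have h3 := rr_le_one ht (mem_Ioi.1 hv)
    rw [Real.norm_eq_abs, abs_of_nonneg (mul_nonneg h1 h2.le)]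
    calc Dp t q v * rr t v ≤ Dp t q v * 1 := mul_le_mul_of_nonneg_left h3 h1
      _ = Dp t q v := mul_one _
  -- difference as single integral
  have h1 : (∫ v in Ioi (Real.sqrt t), e * Dp t q v) = e := by
    rw [integral_const_mul, Dp_integral q ht, mul_one]
  have hdiff : (∫ v in Ioi (Real.sqrt t), Dp t q v * (rr t v - e))
      = (∫ v in Ioi (Real.sqrt t), Dp t q v * rr t v) - e := by
    conv_rhs => rw [← h1]
    rw [← integral_sub intDpr (intDp.const_mul e)]
    congr 1
    funext v
    ring
  rw [← hdiff]
  have habs : |∫ v in Ioi (Real.sqrt t), Dp t q v * (rr t v - e)|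
      ≤ ∫ v in Ioi (Real.sqrt t), Dp t q v * |rr t v - e| := by
    have h := norm_integral_le_integral_norm (μ := volume.restrict (Ioi (Real.sqrt t)))
      (f := fun v => Dp t q v * (rr t v - e))
    rw [Real.norm_eq_abs] at h
    refine h.trans (le_of_eq ?_)
    refine setIntegral_congr_fun measurableSet_Ioi fun v hv => ?_
    have h1 := Dp_nonneg q ht (mem_Ioi.1 hv)
    rw [Real.norm_eq_abs, abs_mul, abs_of_nonneg h1]
  refine lt_of_le_of_lt habs ?_
  -- split the integral
  have hsplit : ∫ v in Ioi (Real.sqrt t), Dp t q v * |rr t v - e|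
      = (∫ v in Ioc (Real.sqrt t) V, Dp t q v * |rr t v - e|)
        + ∫ v in Ioi V, Dp t q v * |rr t v - e| := by
    rw [← setIntegral_union (Set.Ioc_disjoint_Ioi le_rfl) measurableSet_Ioi
      (intDpabs.mono_set Ioc_subset_Ioi_self)
      (intDpabs.mono_set (Ioi_subset_Ioi hV)),
      Set.Ioc_union_Ioi_eq_Ioi hV]
  rw [hsplit]
  have hb1 : (∫ v in Ioc (Real.sqrt t) V, Dp t q v * |rr t v - e|)
      ≤ Fc (hfun t V) ^ (q + 1) := by
    rw [← Dp_integral_Ioc q ht hV]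
    refine setIntegral_mono_on (intDpabs.mono_set Ioc_subset_Ioi_self)
      (intDp.mono_set Ioc_subset_Ioi_self) measurableSet_Ioc fun v hv => ?_
    exact hbnd v (mem_Ioi.2 hv.1)
  have hb2 : (∫ v in Ioi V, Dp t q v * |rr t v - e|) ≤ ε / 2 := by
    have step1 : (∫ v in Ioi V, Dp t q v * |rr t v - e|)
        ≤ ∫ v in Ioi V, (ε / 2) * Dp t q v := by
      refine setIntegral_mono_on (intDpabs.mono_set (Ioi_subset_Ioi hV))
        ((intDp.mono_set (Ioi_subset_Ioi hV)).const_mul _) measurableSet_Ioi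
        fun v hv => ?_
      have hvt : Real.sqrt t < v := lt_of_le_of_lt hV (mem_Ioi.1 hv)
      have h1 := Dp_nonneg q ht hvt
      have h2 : |rr t v - e| ≤ ε / 2 := by
        have := hV₀ v (le_trans (le_max_left _ _) (mem_Ioi.1 hv).le)
        rw [Real.dist_eq] at this
        exact this.le
      calc Dp t q v * |rr t v - e| ≤ Dp t q v * (ε / 2) :=
            mul_le_mul_of_nonneg_left h2 h1
        _ = (ε / 2) * Dp t q v := mul_comm _ _
    rw [integral_const_mul] at step1
    have step2 : (∫ v in Ioi V, Dp t q v) ≤ ∫ v in Ioi (Real.sqrt t), Dp t q v := by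
      refine setIntegral_mono_set intDp ?_ (HasSubset.Subset.eventuallyLE (Ioi_subset_Ioi hV))
      refine (ae_restrict_iff' measurableSet_Ioi).2 (ae_of_all _ fun v hv => ?_)
      exact Dp_nonneg q ht (mem_Ioi.1 hv)
    rw [Dp_integral q ht] at step2
    calc (∫ v in Ioi V, Dp t q v * |rr t v - e|) ≤ ε / 2 * ∫ v in Ioi V, Dp t q v := step1
      _ ≤ ε / 2 * 1 := by
          refine mul_le_mul_of_nonneg_left step2 (by linarith)
      _ = ε / 2 := mul_one _
  linarith

lemma abs_le_V1 {p : ℕ} (x : ℕ → ℝ) (i : Fin p) : |x i| ≤ V1 p x := by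
  rw [V1]
  exact le_ciSup (f := fun i : Fin p => |x i|) (Set.Finite.bddAbove (Set.finite_range _)) i

lemma V1_le {p : ℕ} (x : ℕ → ℝ) {c : ℝ} (hc : 0 ≤ c) (h : ∀ i : Fin p, |x i| ≤ c) :
    V1 p x ≤ c := Real.iSup_le h hc

lemma min_le_V2 {p : ℕ} (x : ℕ → ℝ) {i j : Fin p} (hij : i ≠ j) :
    min |x i| |x j| ≤ V2 p x := by
  rw [V2]
  calc min |x i| |x j| = ⨆ _ : i ≠ j, min |x i| |x j| :=
        (ciSup_pos (p := i ≠ j) (f := fun _ => min |x (i:ℕ)| |x (j:ℕ)|) hij).symm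
    _ ≤ ⨆ j' : Fin p, ⨆ _ : i ≠ j', min |x i| |x j'| :=
        le_ciSup (f := fun j' : Fin p => ⨆ _ : i ≠ j', min |x i| |x j'|)
          (Set.Finite.bddAbove (Set.finite_range _)) j
    _ ≤ ⨆ i' : Fin p, ⨆ j' : Fin p, ⨆ _ : i' ≠ j', min |x i'| |x j'| :=
        le_ciSup (f := fun i' : Fin p => ⨆ j' : Fin p, ⨆ _ : i' ≠ j', min |x i'| |x j'|)
          (Set.Finite.bddAbove (Set.finite_range _)) i

lemma V2_le {p : ℕ} (x : ℕ → ℝ) {c : ℝ} (hc : 0 ≤ c)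
    (h : ∀ i j : Fin p, i ≠ j → min |x i| |x j| ≤ c) : V2 p x ≤ c :=
  Real.iSup_le (fun i => Real.iSup_le (fun j => Real.iSup_le (fun hij => h i j hij)
    hc) hc) hc

lemma V2_nonneg {p : ℕ} (hp : 2 ≤ p) (x : ℕ → ℝ) : 0 ≤ V2 p x := by
  have h01 : (⟨0, by omega⟩ : Fin p) ≠ (⟨1, by omega⟩ : Fin p) := by
    simp [Fin.ext_iff]
  refine le_trans ?_ (min_le_V2 x h01)
  exact le_min (abs_nonneg _) (abs_nonneg _)

lemma event_iff {p : ℕ} (hp : 2 ≤ p) {t : ℝ} (ht : 0 ≤ t) (x : ℕ → ℝ) :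
    (t < V1 p x * (V1 p x - V2 p x)) ↔
      ∃ i : Fin p, Real.sqrt t < |x i| ∧
        ∀ j : Fin p, j ≠ i → |x j| < hfun t |x i| := by
  haveI : NeZero p := ⟨by omega⟩
  constructor
  · intro hlt
    obtain ⟨i0, -, hmax⟩ := Finset.exists_max_image Finset.univ (fun i : Fin p => |x i|)
      ⟨0, Finset.mem_univ 0⟩
    have hmax' : ∀ j : Fin p, |x j| ≤ |x i0| := fun j => hmax j (Finset.mem_univ j)
    have hV1 : V1 p x = |x i0| :=
      le_antisymm (V1_le x (abs_nonneg _) hmax') (abs_le_V1 x i0)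
    have hV2nn : 0 ≤ V2 p x := V2_nonneg hp x
    have hV1nn : 0 ≤ V1 p x := hV1 ▸ abs_nonneg _
    have hV1pos : 0 < V1 p x := by nlinarith
    have hsq : t < V1 p x ^ 2 := by nlinarith
    have hV1sqrt : Real.sqrt t < V1 p x := (Real.sqrt_lt' hV1pos).2 hsq
    refine ⟨i0, hV1 ▸ hV1sqrt, fun j hj => ?_⟩
    have h1 : |x j| ≤ V2 p x := by
      have hm : min |x i0| |x j| ≤ V2 p x := min_le_V2 x (Ne.symm hj)
      rwa [min_eq_right (hmax' j)] at hm
    have h2 : V2 p x < V1 p x - t / V1 p x := by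
      have hd : t / V1 p x < V1 p x - V2 p x := by
        rw [div_lt_iff₀ hV1pos]
        nlinarith
      linarith
    calc |x j| ≤ V2 p x := h1
      _ < V1 p x - t / V1 p x := h2
      _ = hfun t |x i0| := by rw [hV1, hfun]
  · rintro ⟨i, hi1, hi2⟩
    have hxi_pos : 0 < |x i| := lt_of_le_of_lt (Real.sqrt_nonneg t) hi1
    have hle : hfun t |x i| ≤ |x i| := hfun_le ht hxi_pos
    have hmax' : ∀ j : Fin p, |x j| ≤ |x i| := by
      intro j
      by_cases hj : j = i
      · subst hj; exact le_rfl
      · exact le_of_lt (lt_of_lt_of_le (hi2 j hj) hle)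
    have hV1 : V1 p x = |x i| := le_antisymm (V1_le x (abs_nonneg _) hmax') (abs_le_V1 x i)
    have hSne : (Finset.univ.erase i).Nonempty := by
      rw [← Finset.card_pos, Finset.card_erase_of_mem (Finset.mem_univ i), Finset.card_univ,
        Fintype.card_fin]
      omega
    obtain ⟨j1, hj1S, hj1⟩ := Finset.exists_max_image (Finset.univ.erase i)
      (fun j : Fin p => |x j|) hSne
    have hV2le : V2 p x ≤ |x j1| := by
      refine V2_le x (abs_nonneg _) fun a b hab => ?_
      rcases ne_or_eq a i with ha | rfl
      · exact le_trans (min_le_left _ _)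
          (hj1 a (Finset.mem_erase.2 ⟨ha, Finset.mem_univ a⟩))
      · exact le_trans (min_le_right _ _)
          (hj1 b (Finset.mem_erase.2 ⟨Ne.symm hab, Finset.mem_univ b⟩))
    have hj1lt : |x j1| < hfun t |x i| := hi2 j1 (Finset.mem_erase.1 hj1S).1
    have hV2lt : V2 p x < |x i| - t / |x i| := by
      refine lt_of_le_of_lt hV2le ?_
      rw [hfun] at hj1lt
      exact hj1lt
    rw [hV1]
    have hd : t / |x i| < |x i| - V2 p x := by linarith
    calc t = |x i| * (t / |x i|) := by field_simp
      _ < |x i| * (|x i| - V2 p x) := by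
          exact mul_lt_mul_of_pos_left hd hxi_pos

lemma gauss_abs_lt {c : ℝ} (hc : 0 ≤ c) :
    gaussianReal 0 1 {u : ℝ | |u| < c} = ENNReal.ofReal (Fc c) := by
  have hset : {u : ℝ | |u| < c} = Ioo (-c) c := by
    ext u; simp [abs_lt]
  rw [hset, gaussianReal_apply_eq_integral 0 one_ne_zero]
  congr 1
  have h1 : ∫ u in Ioo (-c) c, gaussianPDFReal 0 1 u = ∫ u in Ioc (-c) c, g01 u := by
    rw [← integral_Ioc_eq_integral_Ioo]
    rfl
  rw [h1, ← intervalIntegral.integral_of_le (by linarith : -c ≤ c)]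
  have h2 : ∫ u in (-c)..c, g01 u = (∫ u in (-c)..(0:ℝ), g01 u) + ∫ u in (0:ℝ)..c, g01 u :=
    (intervalIntegral.integral_add_adjacent_intervals
      (g01_cont.intervalIntegrable _ _) (g01_cont.intervalIntegrable _ _)).symm
  have h3 : ∫ u in (-c)..(0:ℝ), g01 u = ∫ u in (0:ℝ)..c, g01 u := by
    have h4 : ∫ u in (0:ℝ)..c, g01 (-u) = ∫ u in (-c)..(-(0:ℝ)), g01 u :=
      intervalIntegral.integral_comp_neg g01
    rw [neg_zero] at h4
    rw [← h4]
    exact intervalIntegral.integral_congr fun u _ => g01_even u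
  rw [h2, h3, Fc]
  ring

section prob

variable {Ω : Type*} [MeasurableSpace Ω] (μ : Measure Ω) [IsProbabilityMeasure μ]
  (Z : ℕ → Ω → ℝ)

lemma map_pi (hmeas : ∀ i, Measurable (Z i))
    (hindep : iIndepFun Z μ)
    (hdist : ∀ i, μ.map (Z i) = gaussianReal 0 1) (p : ℕ) :
    μ.map (fun ω (i : Fin p) => Z i ω)
      = Measure.pi (fun _ : Fin p => gaussianReal 0 1) := by
  have hvec : Measurable (fun ω (i : Fin p) => Z i ω) :=
    measurable_pi_lambda _ fun i => hmeas i
  refine (Measure.pi_eq (μ := fun _ : Fin p => gaussianReal 0 1) fun s hs => ?_).symm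
  rw [Measure.map_apply hvec (MeasurableSet.univ_pi hs)]
  classical
  set S' : ℕ → Set ℝ := fun m => if h : m < p then s ⟨m, h⟩ else Set.univ with hS'
  have hpre : (fun ω (i : Fin p) => Z i ω) ⁻¹' (Set.pi Set.univ s)
      = ⋂ m ∈ Finset.range p, Z m ⁻¹' (S' m) := by
    ext ω
    simp only [Set.mem_preimage, Set.mem_pi, Set.mem_univ, forall_true_left, Set.mem_iInter,
      Finset.mem_range, hS']
    constructor
    · intro h m hm
      rw [dif_pos hm]
      exact h ⟨m, hm⟩
    · intro h i
      have := h i i.isLt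
      rwa [dif_pos i.isLt, Fin.eta] at this
  have hS'meas : ∀ m, m ∈ Finset.range p → MeasurableSet (S' m) := by
    intro m _
    by_cases hm : m < p
    · rw [hS']; simp only [dif_pos hm]; exact hs _
    · rw [hS']; simp only [dif_neg hm]; exact MeasurableSet.univ
  rw [hpre, hindep.measure_inter_preimage_eq_mul (Finset.range p) hS'meas]
  rw [← Fin.prod_univ_eq_prod_range (fun m => μ (Z m ⁻¹' S' m)) p]
  refine Finset.prod_congr rfl fun i _ => ?_
  have h1 : S' (i : ℕ) = s i := by
    rw [hS']; simp only [dif_pos i.isLt, Fin.eta]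
  rw [h1, ← Measure.map_apply (hmeas i) (hs i), hdist i]

lemma prob_formula (hmeas : ∀ i, Measurable (Z i))
    (hindep : iIndepFun Z μ)
    (hdist : ∀ i, μ.map (Z i) = gaussianReal 0 1)
    {n : ℕ} (hn : 1 ≤ n) {t : ℝ} (ht : 0 ≤ t) :
    (μ {ω | t < V1 (n + 1) (fun i => Z i ω) *
        (V1 (n + 1) (fun i => Z i ω) - V2 (n + 1) (fun i => Z i ω))}).toReal
      = ∫ v in Ioi (Real.sqrt t), ((n : ℝ) + 1) * Fc (hfun t v) ^ n * (2 * g01 v) := by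
  classical
  set p := n + 1 with hp
  have hp2 : 2 ≤ p := by omega
  set γ := gaussianReal 0 1 with hγ
  set A : Fin p → Set Ω := fun i =>
    {ω | Real.sqrt t < |Z i ω| ∧ ∀ j : Fin p, j ≠ i → |Z j ω| < hfun t |Z i ω|} with hA
  set B : Fin p → Set (Fin p → ℝ) := fun i =>
    {y | Real.sqrt t < |y i| ∧ ∀ j : Fin p, j ≠ i → |y j| < hfun t |y i|} with hB
  have hvec : Measurable (fun ω (i : Fin p) => Z i ω) :=
    measurable_pi_lambda _ fun i => hmeas i
  have hBmeas : ∀ i, MeasurableSet (B i) := by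
    intro i
    have h1 : MeasurableSet {y : Fin p → ℝ | Real.sqrt t < |y i|} :=
      measurableSet_lt measurable_const ((measurable_pi_apply i).abs)
    have h2 : ∀ j : Fin p, MeasurableSet {y : Fin p → ℝ | j ≠ i → |y j| < hfun t |y i|} := by
      intro j
      by_cases hj : j = i
      · subst hj; simp
      · have : {y : Fin p → ℝ | j ≠ i → |y j| < hfun t |y i|}
            = {y : Fin p → ℝ | |y j| < hfun t |y i|} := by
          ext y; simp [hj]
        rw [this]
        exact measurableSet_lt ((measurable_pi_apply j).abs)
          (measurable_hfun.comp ((measurable_pi_apply i).abs))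
    have : B i = {y : Fin p → ℝ | Real.sqrt t < |y i|} ∩
        ⋂ j : Fin p, {y | j ≠ i → |y j| < hfun t |y i|} := by
      ext y; simp [hB, Set.mem_iInter]
    rw [this]
    exact h1.inter (MeasurableSet.iInter h2)
  have hAB : ∀ i, A i = (fun ω (k : Fin p) => Z k ω) ⁻¹' (B i) := fun i => rfl
  have hAmeas : ∀ i, MeasurableSet (A i) := fun i => (hAB i) ▸ hvec (hBmeas i)
  -- event = union
  have hset : {ω | t < V1 p (fun i => Z i ω) *
      (V1 p (fun i => Z i ω) - V2 p (fun i => Z i ω))} = ⋃ i : Fin p, A i := by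
    ext ω
    simp only [Set.mem_setOf_eq, Set.mem_iUnion, hA]
    rw [event_iff hp2 ht (fun k => Z k ω)]
  -- disjoint
  have hdisj : Pairwise (Function.onFun Disjoint A) := by
    intro i k hik
    show Disjoint (A i) (A k)
    rw [Set.disjoint_left]
    intro ω hωi hωk
    have h1 : |Z (k:ℕ) ω| < hfun t |Z (i:ℕ) ω| := hωi.2 k (Ne.symm hik)
    have h2 : |Z (i:ℕ) ω| < hfun t |Z (k:ℕ) ω| := hωk.2 i hik
    have hi0 : 0 < |Z (i:ℕ) ω| := lt_of_le_of_lt (Real.sqrt_nonneg t) hωi.1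
    have hk0 : 0 < |Z (k:ℕ) ω| := lt_of_le_of_lt (Real.sqrt_nonneg t) hωk.1
    have h3 := hfun_le ht hi0
    have h4 := hfun_le ht hk0
    linarith
  -- measure of each A i
  have hAval : ∀ i : Fin p, μ (A i)
      = ENNReal.ofReal (2 * ∫ v in Ioi (Real.sqrt t), Fc (hfun t v) ^ n * g01 v) := by
    intro i
    rw [hAB i, ← Measure.map_apply hvec (hBmeas i),
      map_pi μ Z hmeas hindep hdist p]
    -- move to product via piFinSuccAbove
    set C : Set (ℝ × (Fin n → ℝ)) :=
      {z | Real.sqrt t < |z.1| ∧ ∀ j : Fin n, |z.2 j| < hfun t |z.1|} with hC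
    have hCmeas : MeasurableSet C := by
      have h1 : MeasurableSet {z : ℝ × (Fin n → ℝ) | Real.sqrt t < |z.1|} :=
        measurableSet_lt measurable_const measurable_fst.abs
      have h2 : ∀ j : Fin n, MeasurableSet {z : ℝ × (Fin n → ℝ) | |z.2 j| < hfun t |z.1|} := by
        intro j
        refine measurableSet_lt ?_ ?_
        · fun_prop
        · simp only [hfun]; fun_prop
      have : C = {z : ℝ × (Fin n → ℝ) | Real.sqrt t < |z.1|} ∩
          ⋂ j : Fin n, {z | |z.2 j| < hfun t |z.1|} := by
        ext z; simp [hC, Set.mem_iInter]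
      rw [this]
      exact h1.inter (MeasurableSet.iInter h2)
    have hmp := measurePreserving_piFinSuccAbove (fun _ : Fin (n + 1) => γ) i
    have hpre : (MeasurableEquiv.piFinSuccAbove (fun _ : Fin (n+1) => ℝ) i) ⁻¹' C = B i := by
      ext y
      simp only [Set.mem_preimage, MeasurableEquiv.piFinSuccAbove_apply, hC, hB,
        Set.mem_setOf_eq, Fin.removeNth]
      constructor
      · rintro ⟨h1, h2⟩
        refine ⟨h1, fun j hj => ?_⟩
        obtain ⟨k, hk⟩ := Fin.exists_succAbove_eq hj
        rw [← hk]
        exact h2 k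
      · rintro ⟨h1, h2⟩
        exact ⟨h1, fun k => h2 _ (Fin.succAbove_ne i k)⟩
    have hBC : (Measure.pi fun _ : Fin p => γ) (B i)
        = (γ.prod (Measure.pi fun _ : Fin n => γ)) C := by
      rw [← hmp.map_eq,
        Measure.map_apply (MeasurableEquiv.measurable _) hCmeas, hpre]
    rw [hBC, Measure.prod_apply hCmeas]
    -- slice computation
    have hslice : ∀ v : ℝ, (Measure.pi fun _ : Fin n => γ) (Prod.mk v ⁻¹' C)
        = ENNReal.ofReal (Set.indicator {u : ℝ | Real.sqrt t < |u|}
            (fun u => Fc (hfun t |u|) ^ n) v) := by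
      intro v
      by_cases hv : Real.sqrt t < |v|
      · have hsl : Prod.mk v ⁻¹' C = Set.pi Set.univ
            (fun _ : Fin n => {u : ℝ | |u| < hfun t |v|}) := by
          ext w
          simp [hC, hv, Set.mem_pi]
        have hpos : 0 < hfun t |v| := hfun_pos ht hv
        rw [hsl, Measure.pi_pi]
        rw [show (γ {u : ℝ | |u| < hfun t |v|}) = ENNReal.ofReal (Fc (hfun t |v|)) from
          gauss_abs_lt hpos.le]
        rw [Finset.prod_const, Finset.card_univ, Fintype.card_fin,
          ← ENNReal.ofReal_pow (Fc_nonneg hpos.le)]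
        rw [Set.indicator_of_mem (show v ∈ {u : ℝ | Real.sqrt t < |u|} from hv)]
      · have hsl : Prod.mk v ⁻¹' C = ∅ := by
          ext w; simp [hC, hv]
        rw [hsl, Set.indicator_of_notMem (show v ∉ {u : ℝ | Real.sqrt t < |u|} from hv)]
        simp
    rw [lintegral_congr hslice]
    -- lintegral to integral
    set GG : ℝ → ℝ := Set.indicator {u : ℝ | Real.sqrt t < |u|}
      (fun u => Fc (hfun t |u|) ^ n) with hGG
    have hGGnn : 0 ≤ GG := by
      refine Set.indicator_nonneg fun u hu => ?_
      exact pow_nonneg (Fc_nonneg (hfun_pos ht hu).le) n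
    have hGGmeas : Measurable GG := by
      refine Measurable.indicator ?_ ?_
      · exact ((Fc_cont.measurable.comp (measurable_hfun.comp measurable_abs)).pow_const n)
      · exact measurableSet_lt measurable_const measurable_abs
    have hGGbdd : ∀ u, GG u ≤ 1 := by
      intro u
      rw [hGG]
      by_cases hu : u ∈ {u : ℝ | Real.sqrt t < |u|}
      · rw [Set.indicator_of_mem hu]
        exact pow_le_one₀ (Fc_nonneg (hfun_pos ht hu).le) (Fc_le_one (hfun_pos ht hu).le)
      · rw [Set.indicator_of_notMem hu]; norm_num
    have hGGint : Integrable GG γ := by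
      refine Integrable.mono' (integrable_const 1) hGGmeas.aestronglyMeasurable ?_
      refine ae_of_all _ fun u => ?_
      rw [Real.norm_eq_abs, abs_of_nonneg (hGGnn u)]
      exact hGGbdd u
    rw [← ofReal_integral_eq_lintegral_ofReal hGGint (ae_of_all _ hGGnn)]
    congr 1
    -- γ-integral to Lebesgue
    have hγd : γ = volume.withDensity (fun x => ((g01 x).toNNReal : ENNReal)) := by
      rw [hγ, gaussianReal_of_var_ne_zero 0 one_ne_zero]
      rfl
    have hstep : ∫ u, GG u ∂γ = ∫ u, g01 u * GG u := by
      rw [hγd, integral_withDensity_eq_integral_smul (f := fun x => (g01 x).toNNReal)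
        (measurable_real_toNNReal.comp g01_cont.measurable) GG]
      refine integral_congr_ae (ae_of_all _ fun u => ?_)
      simp [NNReal.smul_def, Real.coe_toNNReal _ (g01_pos u).le]
    rw [hstep]
    -- unfold indicator and split
    have hind : ∀ u, g01 u * GG u
        = Set.indicator {u : ℝ | Real.sqrt t < |u|}
            (fun u => Fc (hfun t |u|) ^ n * g01 u) u := by
      intro u
      by_cases hu : u ∈ {u : ℝ | Real.sqrt t < |u|}
      · rw [hGG, Set.indicator_of_mem hu, Set.indicator_of_mem hu]; ring
      · rw [hGG, Set.indicator_of_notMem hu, Set.indicator_of_notMem hu, mul_zero]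
    rw [integral_congr_ae (ae_of_all _ hind),
      integral_indicator (measurableSet_lt measurable_const measurable_abs)]
    set W : ℝ → ℝ := fun u => Fc (hfun t |u|) ^ n * g01 u with hW
    have hWmeas : Measurable W :=
      ((Fc_cont.measurable.comp (measurable_hfun.comp measurable_abs)).pow_const n).mul
        g01_cont.measurable
    have hWint : ∀ (s : Set ℝ), s ⊆ {u : ℝ | Real.sqrt t < |u|} → MeasurableSet s →
        IntegrableOn W s := by
      intro s hs hsm
      refine Integrable.mono' (g01_integrable.integrableOn) hWmeas.aestronglyMeasurable ?_
      refine (ae_restrict_iff' hsm).2 (ae_of_all _ fun u hu => ?_)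
      have hu' : Real.sqrt t < |u| := hs hu
      have h1 : 0 ≤ Fc (hfun t |u|) := Fc_nonneg (hfun_pos ht hu').le
      have h2 : Fc (hfun t |u|) ^ n ≤ 1 :=
        pow_le_one₀ h1 (Fc_le_one (hfun_pos ht hu').le)
      rw [Real.norm_eq_abs, hW, abs_of_nonneg (mul_nonneg (pow_nonneg h1 n) (g01_pos u).le)]
      calc Fc (hfun t |u|) ^ n * g01 u ≤ 1 * g01 u :=
            mul_le_mul_of_nonneg_right h2 (g01_pos u).le
        _ = g01 u := one_mul _
    have hsetU : {u : ℝ | Real.sqrt t < |u|} = Iio (-(Real.sqrt t)) ∪ Ioi (Real.sqrt t) := by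
      ext u
      simp only [Set.mem_setOf_eq, Set.mem_union, mem_Iio, mem_Ioi]
      rw [lt_abs]
      constructor
      · rintro (h | h)
        · right; exact h
        · left; linarith
      · rintro (h | h)
        · right; linarith
        · left; exact h
    have hdisj2 : Disjoint (Iio (-(Real.sqrt t))) (Ioi (Real.sqrt t)) := by
      rw [Set.disjoint_left]
      intro u hu1 hu2
      simp only [mem_Iio, mem_Ioi] at hu1 hu2
      have := Real.sqrt_nonneg t
      linarith
    have hsub1 : Iio (-(Real.sqrt t)) ⊆ {u : ℝ | Real.sqrt t < |u|} := by
      rw [hsetU]; exact Set.subset_union_left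
    have hsub2 : Ioi (Real.sqrt t) ⊆ {u : ℝ | Real.sqrt t < |u|} := by
      rw [hsetU]; exact Set.subset_union_right
    rw [hsetU, setIntegral_union hdisj2 measurableSet_Ioi
      (hWint _ hsub1 measurableSet_Iio) (hWint _ hsub2 measurableSet_Ioi)]
    have hneg : ∫ u in Iio (-(Real.sqrt t)), W u = ∫ u in Ioi (Real.sqrt t), W u := by
      have h4 : ∫ u in Ioi (Real.sqrt t), W (-u) = ∫ u in Iic (-(Real.sqrt t)), W u :=
        integral_comp_neg_Ioi _ W
      have h5 : ∀ u, W (-u) = W u := by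
        intro u; rw [hW]; simp [abs_neg, g01_even]
      rw [setIntegral_congr_set (Iio_ae_eq_Iic (a := -(Real.sqrt t))), ← h4]
      exact setIntegral_congr_fun measurableSet_Ioi fun u _ => h5 u
    have habs : ∫ u in Ioi (Real.sqrt t), W u
        = ∫ v in Ioi (Real.sqrt t), Fc (hfun t v) ^ n * g01 v := by
      refine setIntegral_congr_fun measurableSet_Ioi fun u hu => ?_
      have h6 : |u| = u := abs_of_pos (lt_of_le_of_lt (Real.sqrt_nonneg t) (mem_Ioi.1 hu))
      simp only [hW, h6]
    rw [hneg, habs]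
    congr 1
    ring
  -- sum up
  rw [hset, measure_iUnion hdisj hAmeas, tsum_fintype]
  rw [Finset.sum_congr rfl (fun i _ => hAval i), Finset.sum_const, Finset.card_univ,
    Fintype.card_fin]
  rw [nsmul_eq_mul]
  have hintnn : 0 ≤ 2 * ∫ v in Ioi (Real.sqrt t), Fc (hfun t v) ^ n * g01 v := by
    have : 0 ≤ ∫ v in Ioi (Real.sqrt t), Fc (hfun t v) ^ n * g01 v := by
      refine setIntegral_nonneg measurableSet_Ioi fun v hv => ?_
      exact mul_nonneg (pow_nonneg (Fc_nonneg (hfun_pos ht (mem_Ioi.1 hv)).le) n)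
        (g01_pos v).le
    linarith
  rw [ENNReal.toReal_mul, ENNReal.toReal_natCast, ENNReal.toReal_ofReal hintnn]
  have h2int : ∫ v in Ioi (Real.sqrt t), ((n : ℝ) + 1) * Fc (hfun t v) ^ n * (2 * g01 v)
      = ∫ v in Ioi (Real.sqrt t), (2 * ((n : ℝ) + 1)) * (Fc (hfun t v) ^ n * g01 v) :=
    setIntegral_congr_fun measurableSet_Ioi fun v _ => by ring
  rw [h2int, integral_const_mul, hp]
  push_cast
  ring

end prob
/-- For i.i.d. standard normals, the covariance test statistic `T₁(p) = V₁(p)(V₁(p) − V₂(p))`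
converges in distribution to the standard exponential distribution: for every `t ≥ 0`,
`ℙ(V₁(p)(V₁(p) − V₂(p)) > t) → e^{−t}`. -/
theorem stmt8 {Ω : Type*} [MeasurableSpace Ω] (μ : Measure Ω) [IsProbabilityMeasure μ]
    (Z : ℕ → Ω → ℝ) (hmeas : ∀ i, Measurable (Z i))
    (hindep : iIndepFun Z μ)
    (hdist : ∀ i, μ.map (Z i) = gaussianReal 0 1)
    (t : ℝ) (ht : 0 ≤ t) :
    Tendsto
      (fun p : ℕ =>
        (μ {ω | t < V1 p (fun i => Z i ω) *
            (V1 p (fun i => Z i ω) - V2 p (fun i => Z i ω))}).toReal)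
      atTop (nhds (Real.exp (-t))) := by
 
  have hKK := KK_tendsto ht
  have hcomp : Tendsto (fun p : ℕ => p - 1) atTop atTop := tendsto_sub_atTop_nat 1
  have h2 := hKK.comp hcomp
  refine h2.congr' ?_
  filter_upwards [eventually_ge_atTop 2] with p hp
  obtain ⟨n, rfl⟩ : ∃ n, p = n + 1 := ⟨p - 1, by omega⟩
  have hn : 1 ≤ n := by omega
  have := (prob_formula μ Z hmeas hindep hdist hn ht).symm
  simpa using this
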